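/- Let f(x)=e^x/(1+e^x) and c_k < c_{k+1}. For all v > c_k - ln(1 - e^{-(c_{k+1}-c_k)}), we have (1 - f(c_k - v))·f(c_{k+1} - v) > f(c_k - v). -/

import Mathlib

noncomputable def sigmoid (x : ℝ) : ℝ := Real.exp x / (1 + Real.exp x)

theorem stmt_16 (ck ckk : ℝ) (hc : ck < ckk) :
    ∀ v : ℝ, v > ck - Real.log (1 - Real.exp (-(ckk - ck))) →
      (1 - sigmoid (ck - v)) * sigmoid (ckk - v) > sigmoid (ck - v) := by
  intro v hv
  have ht : (0:ℝ) < 1 - Real.exp (-(ckk - ck)) := by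
    have : Real.exp (-(ckk - ck)) < 1 := Real.exp_lt_one_iff.mpr (by linarith)
    linarith
  have ha : Real.exp (ck - v) < 1 - Real.exp (-(ckk - ck)) := by
    have h1 : ck - v < Real.log (1 - Real.exp (-(ckk - ck))) := by linarith
    calc Real.exp (ck - v) < Real.exp (Real.log (1 - Real.exp (-(ckk - ck)))) :=
          Real.exp_lt_exp.mpr h1
      _ = _ := Real.exp_log ht
  have hab : Real.exp (-(ckk - ck)) = Real.exp (ck - v) / Real.exp (ckk - v) := by
    rw [← Real.exp_sub]; ring_nf
  have hb : (0:ℝ) < Real.exp (ckk - v) := Real.exp_pos _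
  have hea : (0:ℝ) < Real.exp (ck - v) := Real.exp_pos _
  have key : Real.exp (ck - v) * Real.exp (ckk - v) + Real.exp (ck - v)
      < Real.exp (ckk - v) := by
    rw [hab] at ha
    have := (mul_lt_mul_of_pos_right ha hb)
    field_simp at this
    nlinarith
  have h1 : (0:ℝ) < 1 + Real.exp (ck - v) := by linarith
  have h2 : (0:ℝ) < 1 + Real.exp (ckk - v) := by linarith
  unfold sigmoid
  have e1 : 1 - Real.exp (ck - v) / (1 + Real.exp (ck - v)) = 1 / (1 + Real.exp (ck - v)) := by
    field_simp
    ring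
  rw [e1, div_mul_div_comm, one_mul, gt_iff_lt, div_lt_div_iff₀ h1 (by positivity)]
  nlinarith [mul_pos hea hb]
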